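/- If the reward gradient is uniformly bounded, ||∇_θ r(s,a;θ)|| ≤ L_r for all s, a, θ, then the optimal soft Q-function is Lipschitz continuous in the reward parameter: for all θ₁, θ₂ and all (s,a), |Q_{θ₁}(s,a) − Q_{θ₂}(s,a)| ≤ L_q ||θ₁ − θ₂||, where L_q = L_r/(1−γ). -/
import Mathlib


open Real BigOperators Finset

noncomputable section

/-- `P` is a transition kernel: each row `P s a ·` is a probability distribution. -/
def IsKernel {S A : Type} [Fintype S] (P : S → A → S → ℝ) : Prop :=
  (∀ s a s', 0 ≤ P s a s') ∧ ∀ s a, ∑ s', P s a s' = 1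

/-- `p` is a policy: each `p s ·` is a probability distribution over actions. -/
def IsPolicy {S A : Type} [Fintype A] (p : S → A → ℝ) : Prop :=
  (∀ s a, 0 ≤ p s a) ∧ ∀ s, ∑ a, p s a = 1

/-- `η` is a probability distribution over states. -/
def IsDist {S : Type} [Fintype S] (η : S → ℝ) : Prop :=
  (∀ s, 0 ≤ η s) ∧ ∑ s, η s = 1

/-- Distribution of the state at time `t` under initial distribution `η`,
policy `pol` and transition kernel `P`. -/
def stateDist {S A : Type} [Fintype S] [Fintype A]
    (P : S → A → S → ℝ) (pol : S → A → ℝ) (η : S → ℝ) : ℕ → S → ℝ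
  | 0 => η
  | (t + 1) => fun s' => ∑ s, ∑ a, stateDist P pol η t s * pol s a * P s a s'

/-- `E_{τ ∼ (η, pol, P)} [ ∑_t γ^t f(s_t, a_t) ]`. -/
def discSum {S A : Type} [Fintype S] [Fintype A]
    (γ : ℝ) (P : S → A → S → ℝ) (pol : S → A → ℝ) (η : S → ℝ) (f : S → A → ℝ) : ℝ :=
  ∑' t : ℕ, γ ^ t * ∑ s, ∑ a, stateDist P pol η t s * pol s a * f s a

/-- Discounted state-action visitation measure
`d(s,a) = (1-γ) pol(a|s) ∑_t γ^t Pr(s_t = s)`. -/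
def visit {S A : Type} [Fintype S] [Fintype A]
    (γ : ℝ) (P : S → A → S → ℝ) (pol : S → A → ℝ) (η : S → ℝ) (s : S) (a : A) : ℝ :=
  (1 - γ) * pol s a * ∑' t : ℕ, γ ^ t * stateDist P pol η t s

/-- Log-sum-exp soft value function `V(s) = log ∑_a exp Q(s,a)`. -/
def lse {S A : Type} [Fintype A] (Q : S → A → ℝ) (s : S) : ℝ :=
  Real.log (∑ a, Real.exp (Q s a))

/-- Softmax policy `π(a|s) = exp Q(s,a) / ∑_{a'} exp Q(s,a')`. -/
def softmax {S A : Type} [Fintype A] (Q : S → A → ℝ) (s : S) (a : A) : ℝ :=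
  Real.exp (Q s a) / ∑ a', Real.exp (Q s a')


private lemma lse_abs_le {A : Type} [Fintype A] [Nonempty A] (Q Q' : A → ℝ) (M : ℝ)
    (h : ∀ a, |Q a - Q' a| ≤ M) :
    |Real.log (∑ a, Real.exp (Q a)) - Real.log (∑ a, Real.exp (Q' a))| ≤ M := by
  have key : ∀ (f g : A → ℝ), (∀ a, f a ≤ g a + M) →
      Real.log (∑ a, Real.exp (f a)) - Real.log (∑ a, Real.exp (g a)) ≤ M := by
    intro f g hfg
    have h1 : (∑ a, Real.exp (f a)) ≤ Real.exp M * ∑ a, Real.exp (g a) := by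
      rw [Finset.mul_sum]
      exact Finset.sum_le_sum fun a _ => by
        rw [← Real.exp_add]; exact Real.exp_le_exp.2 (by linarith [hfg a])
    have hg : (0:ℝ) < ∑ a, Real.exp (g a) :=
      Finset.sum_pos (fun a _ => Real.exp_pos _) univ_nonempty
    have hf : (0:ℝ) < ∑ a, Real.exp (f a) :=
      Finset.sum_pos (fun a _ => Real.exp_pos _) univ_nonempty
    have := Real.log_le_log (by positivity) h1
    rw [Real.log_mul (by positivity) (by positivity), Real.log_exp] at this
    linarith
  rw [abs_sub_le_iff]
  constructor
  · exact key _ _ fun a => by have := h a; rw [abs_sub_le_iff] at this; linarith [this.1]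
  · exact key _ _ fun a => by have := h a; rw [abs_sub_le_iff] at this; linarith [this.2]

/-- **Lipschitz continuity of the optimal soft Q-function in `θ`.**
If `‖∇_θ r(s,a;θ)‖ ≤ L_r` for all `s, a, θ`, then the optimal soft Q-function of the
entropy-regularized MDP with kernel `P̂` and reward `r(·,·;θ) + U` satisfies
`|Q_{θ₁}(s,a) - Q_{θ₂}(s,a)| ≤ L_q ‖θ₁ - θ₂‖` with `L_q = L_r/(1-γ)`. -/
theorem stmt9 {S A : Type} [Fintype S] [Fintype A] [Nonempty S] [Nonempty A] (d : ℕ)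
    (γ : ℝ) (hγ : γ ∈ Set.Ioo (0 : ℝ) 1)
    (Phat : S → A → S → ℝ) (hPhat : IsKernel Phat)
    (r : S → A → EuclideanSpace ℝ (Fin d) → ℝ) (U : S → A → ℝ)
    (hrd : ∀ s a, Differentiable ℝ (r s a))
    (Lr : ℝ) (hrb : ∀ s a θ, ‖gradient (r s a) θ‖ ≤ Lr)
    (Q : EuclideanSpace ℝ (Fin d) → S → A → ℝ)
    (hQ : ∀ θ s a, Q θ s a = r s a θ + U s a + γ * ∑ s', Phat s a s' * lse (Q θ) s') :
    ∀ θ₁ θ₂ s a, |Q θ₁ s a - Q θ₂ s a| ≤ Lr / (1 - γ) * ‖θ₁ - θ₂‖ := by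
  obtain ⟨hγ0, hγ1⟩ := hγ
  intro θ₁ θ₂ s a
  have hr : ∀ s a, |r s a θ₁ - r s a θ₂| ≤ Lr * ‖θ₁ - θ₂‖ := by
    intro s a
    have := Convex.norm_image_sub_le_of_norm_fderiv_le
      (f := r s a) (s := Set.univ) (C := Lr)
      (fun x _ => (hrd s a x)) (fun x _ => by
        have : ‖gradient (r s a) x‖ = ‖fderiv ℝ (r s a) x‖ := by
          rw [gradient]; exact LinearIsometryEquiv.norm_map _ _
        rw [← this]; exact hrb s a x)
      convex_univ (Set.mem_univ θ₂) (Set.mem_univ θ₁)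
    simpa [Real.norm_eq_abs] using this
  set F : S × A → ℝ := fun p => |Q θ₁ p.1 p.2 - Q θ₂ p.1 p.2| with hF
  set M : ℝ := Finset.sup' (univ ×ˢ univ) (by simp) F with hM
  have hM_le : ∀ s a, |Q θ₁ s a - Q θ₂ s a| ≤ M := fun s a =>
    Finset.le_sup' F (by simp : ((s, a) : S × A) ∈ univ ×ˢ univ)
  have hstep : ∀ s a, |Q θ₁ s a - Q θ₂ s a| ≤ Lr * ‖θ₁ - θ₂‖ + γ * M := by
    intro s a
    have hdiff : Q θ₁ s a - Q θ₂ s a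
        = (r s a θ₁ - r s a θ₂)
          + γ * ∑ s', Phat s a s' * (lse (Q θ₁) s' - lse (Q θ₂) s') := by
      rw [hQ θ₁ s a, hQ θ₂ s a]
      simp only [Finset.mul_sum, mul_sub, Finset.sum_sub_distrib]
      ring
    have hlse : ∀ s', |lse (Q θ₁) s' - lse (Q θ₂) s'| ≤ M := fun s' =>
      lse_abs_le (Q θ₁ s') (Q θ₂ s') M (fun a' => hM_le s' a')
    have hsum : |∑ s', Phat s a s' * (lse (Q θ₁) s' - lse (Q θ₂) s')| ≤ M := by
      calc |∑ s', Phat s a s' * (lse (Q θ₁) s' - lse (Q θ₂) s')|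
          ≤ ∑ s', |Phat s a s' * (lse (Q θ₁) s' - lse (Q θ₂) s')| :=
            Finset.abs_sum_le_sum_abs _ _
        _ ≤ ∑ s', Phat s a s' * M := Finset.sum_le_sum fun s' _ => by
            rw [abs_mul, abs_of_nonneg (hPhat.1 s a s')]
            exact mul_le_mul_of_nonneg_left (hlse s') (hPhat.1 s a s')
        _ = M := by rw [← Finset.sum_mul, hPhat.2 s a, one_mul]
    calc |Q θ₁ s a - Q θ₂ s a|
        ≤ |r s a θ₁ - r s a θ₂|
          + |γ * ∑ s', Phat s a s' * (lse (Q θ₁) s' - lse (Q θ₂) s')| := by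
          rw [hdiff]; exact abs_add_le _ _
      _ ≤ Lr * ‖θ₁ - θ₂‖ + γ * M := by
          refine add_le_add (hr s a) ?_
          rw [abs_mul, abs_of_pos hγ0]
          exact mul_le_mul_of_nonneg_left hsum hγ0.le
  have hMle : M ≤ Lr * ‖θ₁ - θ₂‖ + γ * M :=
    Finset.sup'_le _ _ fun p _ => hstep p.1 p.2
  have hMfinal : M ≤ Lr / (1 - γ) * ‖θ₁ - θ₂‖ := by
    rw [div_mul_eq_mul_div, le_div_iff₀ (by linarith)]
    nlinarith
  exact (hM_le s a).trans hMfinal
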